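/- Let P be a connected finite Γ-colored d-complete poset and suppose there exist adjacent colors b, c ∈ Γ with L_b(P) = L_c(P) = 2. Then P is not an order filter of any Γ-colored minuscule poset; i.e., there is no Γ-colored minuscule poset Q (with coloring κ_Q : Q → Γ) such that P is an order filter of Q and κ_Q restricted to P equals κ. -/

import Mathlib

/-!
Common definitions: Dynkin diagram data, Γ-colored posets, and the coloring
properties EC, NA, AC, ICE2, UCB1, LCB1 from the paper, together with
Γ-colored d-complete and Γ-colored minuscule posets, top trees, slant
irreducibility, extensions, lower frontier censuses, and full heaps.
-/

universe u v w

variable {Γ : Type u} {P : Type v}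

/-- The integers `θ a b` form a Dynkin diagram datum. -/
def DynkinDatum (θ : Γ → Γ → ℤ) : Prop :=
  (∀ a : Γ, θ a a = 2) ∧ (∀ a b : Γ, a ≠ b → θ a b ≤ 0) ∧
    (∀ a b : Γ, a ≠ b → (θ a b = 0 ↔ θ b a = 0))

/-- Colors `a` and `b` are adjacent. -/
def AdjColor (θ : Γ → Γ → ℤ) (a b : Γ) : Prop := θ a b < 0

/-- The Dynkin diagram is simply laced. -/
def SimplyLaced (θ : Γ → Γ → ℤ) : Prop :=
  ∀ a b : Γ, a ≠ b → θ a b = 0 ∨ θ a b = -1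

/-- All closed intervals are finite. -/
def LocallyFinitePoset (α : Type*) [PartialOrder α] : Prop :=
  ∀ x y : α, (Set.Icc x y).Finite

/-- A poset is connected if it cannot be written as a disjoint union of two nonempty
subposets with no comparabilities between them. -/
def ConnectedPoset (α : Type*) [PartialOrder α] : Prop :=
  ∀ S : Set α, S.Nonempty → Sᶜ.Nonempty → ∃ x ∈ S, ∃ y ∈ Sᶜ, x ≤ y ∨ y ≤ x

section
variable [PartialOrder P]

/-- (EC) Elements with equal colors are comparable. -/
def ColoredEC (κ : P → Γ) : Prop := ∀ x y : P, κ x = κ y → x ≤ y ∨ y ≤ x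

/-- (NA) Neighbors have adjacent colors. -/
def ColoredNA (θ : Γ → Γ → ℤ) (κ : P → Γ) : Prop :=
  ∀ x y : P, x ⋖ y → AdjColor θ (κ x) (κ y)

/-- (AC) Elements with adjacent colors are comparable. -/
def ColoredAC (θ : Γ → Γ → ℤ) (κ : P → Γ) : Prop :=
  ∀ x y : P, AdjColor θ (κ x) (κ y) → x ≤ y ∨ y ≤ x

/-- (ICE2) Between consecutive elements of a color `a`, the census of colors
adjacent to `a` is two. -/
def ColoredICE2 (θ : Γ → Γ → ℤ) (κ : P → Γ) : Prop :=
  ∀ (a : Γ) (x y : P), κ x = a → κ y = a → x < y → (∀ z ∈ Set.Ioo x y, κ z ≠ a) →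
    (∑ᶠ z ∈ Set.Ioo x y, -θ (κ z) a) = 2

/-- `U(x,P)`: elements above `x` with color adjacent to that of `x`. -/
def USet (θ : Γ → Γ → ℤ) (κ : P → Γ) (x : P) : Set P :=
  {y : P | x < y ∧ AdjColor θ (κ y) (κ x)}

/-- `L(x,P)`: elements below `x` with color adjacent to that of `x`. -/
def LSet (θ : Γ → Γ → ℤ) (κ : P → Γ) (x : P) : Set P :=
  {y : P | y < x ∧ AdjColor θ (κ y) (κ x)}

/-- (UCB1) Upper frontier census bound. -/
def ColoredUCB1 (θ : Γ → Γ → ℤ) (κ : P → Γ) : Prop :=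
  ∀ x : P, (∀ y : P, κ y = κ x → ¬x < y) →
    (USet θ κ x).Finite ∧ (∑ᶠ y ∈ USet θ κ x, -θ (κ y) (κ x)) ≤ 1

/-- (LCB1) Lower frontier census bound. -/
def ColoredLCB1 (θ : Γ → Γ → ℤ) (κ : P → Γ) : Prop :=
  ∀ x : P, (∀ y : P, κ y = κ x → ¬y < x) →
    (LSet θ κ x).Finite ∧ (∑ᶠ y ∈ LSet θ κ x, -θ (κ y) (κ x)) ≤ 1

/-- A Γ-colored d-complete poset: locally finite, surjectively colored, and
satisfying EC, NA, AC, ICE2, and UCB1. -/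
def GColoredDComplete (θ : Γ → Γ → ℤ) (κ : P → Γ) : Prop :=
  LocallyFinitePoset P ∧ Function.Surjective κ ∧ ColoredEC κ ∧ ColoredNA θ κ ∧
    ColoredAC θ κ ∧ ColoredICE2 θ κ ∧ ColoredUCB1 θ κ

/-- A Γ-colored minuscule poset: Γ-colored d-complete and LCB1. -/
def GColoredMinuscule (θ : Γ → Γ → ℤ) (κ : P → Γ) : Prop :=
  GColoredDComplete θ κ ∧ ColoredLCB1 θ κ

/-- The top tree: the set of elements maximal in their color class. -/
def TopTree (κ : P → Γ) : Set P := {x : P | ∀ y : P, κ y = κ x → ¬x < y}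

/-- `x` is covered by `y` within the subposet `S`. -/
def CoversIn (S : Set P) (x y : P) : Prop :=
  x ∈ S ∧ y ∈ S ∧ x < y ∧ ∀ z ∈ S, x < z → ¬z < y

/-- Slant irreducibility of a Γ-colored d-complete poset. -/
def SlantIrreducible (κ : P → Γ) : Prop :=
  ConnectedPoset P ∧ ∀ x y : P, CoversIn (TopTree κ) x y → ∃ z : P, z ≠ y ∧ κ z = κ y

/-- A saturated chain in a subposet `S`: a chain that is convex in `S`. -/
def SaturatedChainIn (S C : Set P) : Prop :=
  C ⊆ S ∧ IsChain (· ≤ ·) C ∧ ∀ x ∈ C, ∀ y ∈ C, ∀ z ∈ S, x < z → z < y → z ∈ C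

/-- The lower frontier census at the element `y`. -/
noncomputable def LCensus (θ : Γ → Γ → ℤ) (κ : P → Γ) (y : P) : ℤ :=
  ∑ᶠ x ∈ LSet θ κ y, -θ (κ x) (κ y)

/-- A full heap: locally finite, surjectively colored, EC, NA, AC, ICE2, and every
color class order-isomorphic to ℤ. -/
def FullHeap (θ : Γ → Γ → ℤ) (κ : P → Γ) : Prop :=
  LocallyFinitePoset P ∧ Function.Surjective κ ∧ ColoredEC κ ∧ ColoredNA θ κ ∧
    ColoredAC θ κ ∧ ColoredICE2 θ κ ∧ ∀ a : Γ, Nonempty ({x : P // κ x = a} ≃o ℤ)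

end

/-- `ι` realizes the colored poset `A` as an order filter of the colored poset `B`. -/
def FilterEmbedding {G : Type*} {A B : Type*} [PartialOrder A] [PartialOrder B]
    (κ : A → G) (κ' : B → G) (ι : A → B) : Prop :=
  (∀ p q : A, ι p ≤ ι q ↔ p ≤ q) ∧ (∀ p : A, κ' (ι p) = κ p) ∧ IsUpperSet (Set.range ι)

/-- `B` is an extension of `A` by the color `a`, with extending element `x`. -/
def IsExtensionBy {G : Type*} {A B : Type*} [PartialOrder A] [PartialOrder B]
    (θ : G → G → ℤ) (κ : A → G) (κ' : B → G) (a : G) (ι : A → B) (x : B) : Prop :=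
  Finite B ∧ GColoredDComplete θ κ' ∧ ConnectedPoset B ∧
    FilterEmbedding κ κ' ι ∧ (Set.range ι)ᶜ = {x} ∧ κ' x = a

/-- A connected finite Γ-colored d-complete poset with lower frontier
censuses equal to 2 at two adjacent colors is not an order filter of any Γ-colored
minuscule poset. -/
theorem adjacent_censuses_two_not_filter [Fintype Γ] [PartialOrder P] [Fintype P]
    [Nonempty P]
    (θ : Γ → Γ → ℤ) (κ : P → Γ) (hθ : DynkinDatum θ)
    (hdc : GColoredDComplete θ κ) (hconn : ConnectedPoset P)
    (b c : Γ) (hadj : AdjColor θ b c)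
    (yb : P) (hyb : κ yb = b) (hybmin : ∀ z : P, κ z = b → yb ≤ z)
    (yc : P) (hyc : κ yc = c) (hycmin : ∀ z : P, κ z = c → yc ≤ z)
    (hLb : LCensus θ κ yb = 2) (hLc : LCensus θ κ yc = 2) :
    ¬∃ (Q : Type w) (instQ : PartialOrder Q) (κQ : Q → Γ) (ι : P → Q),
        @GColoredMinuscule Γ Q instQ θ κQ ∧
          @FilterEmbedding Γ P Q inferInstance instQ κ κQ ι := by
  classical
  rintro ⟨Q, instQ, κQ, ι, ⟨⟨hlfQ, hsurjQ, hECQ, hNAQ, hACQ, hICE2Q, hUCB1Q⟩, hLCB1Q⟩, hfe⟩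
  obtain ⟨hfe1, hfe2, hfe3⟩ := hfe
  -- injectivity of ι
  have hinj : Function.Injective ι := fun p q h =>
    le_antisymm ((hfe1 p q).1 h.le) ((hfe1 q p).1 h.ge)
  have hmono : ∀ p q : P, p < q → ι p < ι q := by
    intro p q hpq
    exact lt_of_le_of_ne ((hfe1 p q).2 hpq.le) (fun h => hpq.ne (hinj h))
  have hbc : b ≠ c := by
    intro h; rw [h] at hadj; unfold AdjColor at hadj; rw [hθ.1 c] at hadj; omega
  have hcb : θ c b < 0 := by
    have h1 := hθ.2.1 c b hbc.symm
    have h2 := (hθ.2.2 b c hbc).not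
    unfold AdjColor at hadj
    omega
  -- image sum lemma, for a color a with minimum ya
  have himg : ∀ (a : Γ) (ya : P), κ ya = a →
      ∑ x ∈ Finset.image ι (Set.toFinite (LSet θ κ ya)).toFinset, (-θ (κQ x) a)
        = LCensus θ κ ya := by
    intro a ya hya
    rw [Finset.sum_image (fun x _ y _ h => hinj h)]
    have : ∀ z ∈ (Set.toFinite (LSet θ κ ya)).toFinset,
        (-θ (κQ (ι z)) a) = (-θ (κ z) (κ ya)) := by
      intro z _; rw [hfe2 z, hya]
    rw [Finset.sum_congr rfl this, LCensus,
      ← Set.Finite.coe_toFinset (Set.toFinite (LSet θ κ ya)), finsum_mem_coe_finset]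
    refine Finset.sum_congr ?_ (fun _ _ => rfl)
    ext x
    simp [Set.Finite.mem_toFinset]
  -- membership facts about the image
  have himgmem : ∀ (a : Γ) (ya : P), κ ya = a →
      ∀ x ∈ Finset.image ι (Set.toFinite (LSet θ κ ya)).toFinset,
        x < ι ya ∧ AdjColor θ (κQ x) a ∧ x ∈ Set.range ι := by
    intro a ya hya x hx
    obtain ⟨z, hz, rfl⟩ := Finset.mem_image.1 hx
    rw [Set.Finite.mem_toFinset] at hz
    obtain ⟨hz1, hz2⟩ := hz
    refine ⟨hmono z ya hz1, ?_, ⟨z, rfl⟩⟩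
    rw [hfe2 z]; rwa [hya] at hz2
  -- a same-color element of Q below ι ya exists
  have notmin : ∀ (a : Γ) (ya : P), κ ya = a → LCensus θ κ ya = 2 →
      ∃ x : Q, κQ x = a ∧ x < ι ya := by
    intro a ya hya hL2
    by_contra hno
    push_neg at hno
    have hminQ : ∀ y : Q, κQ y = κQ (ι ya) → ¬y < ι ya := by
      intro y hy
      rw [hfe2 ya, hya] at hy
      exact hno y hy
    obtain ⟨hLfin, hLle⟩ := hLCB1Q (ι ya) hminQ
    have hsub : Finset.image ι (Set.toFinite (LSet θ κ ya)).toFinset ⊆ hLfin.toFinset := by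
      intro x hx
      obtain ⟨h1, h2, _⟩ := himgmem a ya hya x hx
      rw [Set.Finite.mem_toFinset]
      refine ⟨h1, ?_⟩
      rwa [hfe2 ya, hya]
    have hsum : ∑ x ∈ hLfin.toFinset, (-θ (κQ x) a) ≤ 1 := by
      have := hLle
      rw [← Set.Finite.coe_toFinset hLfin, finsum_mem_coe_finset] at this
      calc ∑ x ∈ hLfin.toFinset, (-θ (κQ x) a)
          = ∑ x ∈ hLfin.toFinset, (-θ (κQ x) (κQ (ι ya))) := by
            apply Finset.sum_congr rfl; intro x _; rw [hfe2 ya, hya]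
        _ ≤ 1 := this
    have hge : (2 : ℤ) ≤ ∑ x ∈ hLfin.toFinset, (-θ (κQ x) a) := by
      rw [← hL2, ← himg a ya hya]
      apply Finset.sum_le_sum_of_subset_of_nonneg hsub
      intro x hx _
      rw [Set.Finite.mem_toFinset] at hx
      have : AdjColor θ (κQ x) (κQ (ι ya)) := hx.2
      rw [hfe2 ya, hya] at this
      unfold AdjColor at this; omega
    omega
  -- choose a maximal same-color element below ι ya
  have getmax : ∀ (a : Γ) (ya : P),
      (∃ x : Q, κQ x = a ∧ x < ι ya) →
      ∃ xa : Q, κQ xa = a ∧ xa < ι ya ∧ ∀ z : Q, κQ z = a → z < ι ya → z ≤ xa := by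
    intro a ya ⟨x0, hx0a, hx0lt⟩
    set F : Finset Q :=
      (hlfQ x0 (ι ya)).toFinset.filter (fun z => κQ z = a ∧ z < ι ya) with hF
    have hx0F : x0 ∈ F := by
      rw [hF, Finset.mem_filter, Set.Finite.mem_toFinset]
      exact ⟨⟨le_refl x0, hx0lt.le⟩, hx0a, hx0lt⟩
    obtain ⟨m, hmF, hmmax⟩ := F.exists_maximal ⟨x0, hx0F⟩
    rw [hF, Finset.mem_filter, Set.Finite.mem_toFinset] at hmF
    refine ⟨m, hmF.2.1, hmF.2.2, ?_⟩
    intro z hza hzlt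
    rcases hECQ z m (by rw [hza, hmF.2.1]) with h | h
    · exact h
    · rcases eq_or_lt_of_le h with h' | h'
      · exact h'.ge
      · exfalso
        refine absurd (hmmax (?_ : z ∈ F) h'.le) h'.not_ge
        rw [hF, Finset.mem_filter, Set.Finite.mem_toFinset]
        exact ⟨⟨le_trans hmF.1.1 h, hzlt.le⟩, hza, hzlt⟩
  -- elements below a minimum are not in the range
  have hnotrange : ∀ (a : Γ) (ya : P), κ ya = a → (∀ z : P, κ z = a → ya ≤ z) →
      ∀ x : Q, κQ x = a → x < ι ya → x ∉ Set.range ι := by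
    rintro a ya hya hyamin x hxa hxlt ⟨w, rfl⟩
    have hwa : κ w = a := by rw [← hfe2 w, hxa]
    have : w < ya := by
      have := (hfe1 w ya).1 hxlt.le
      exact lt_of_le_of_ne this (fun h => hxlt.ne (by rw [h]))
    exact absurd (hyamin w hwa) this.not_ge
  -- the symmetric key contradiction
  have sym : ∀ (a a' : Γ), a ≠ a' → θ a' a < 0 →
      ∀ (ya : P), κ ya = a → (∀ z : P, κ z = a → ya ≤ z) → LCensus θ κ ya = 2 →
      ∀ (xa : Q), κQ xa = a → xa < ι ya → (∀ z : Q, κQ z = a → z < ι ya → z ≤ xa) →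
      ∀ (xa' : Q), κQ xa' = a' → xa' ∉ Set.range ι → xa < xa' → False := by
    intro a a' haa' ha'a ya hya hyamin hL2 xa hxaa hxalt hxamax xa' hxa'c hxa'r hlt
    -- xa' < ι ya
    have hxa'lt : xa' < ι ya := by
      have hcomp : xa' ≤ ι ya ∨ ι ya ≤ xa' := by
        apply hACQ
        rw [hxa'c, hfe2 ya, hya]
        exact ha'a
      rcases hcomp with h | h
      · refine lt_of_le_of_ne h (fun h' => hxa'r ⟨ya, h'.symm⟩)
      · exact absurd (hfe3 h ⟨ya, rfl⟩) hxa'r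
    -- no a-colored element strictly between xa and ι ya
    have hconsec : ∀ z ∈ Set.Ioo xa (ι ya), κQ z ≠ a := by
      rintro z ⟨hz1, hz2⟩ hza
      exact absurd (hxamax z hza hz2) hz1.not_ge
    have hIfin : (Set.Ioo xa (ι ya)).Finite :=
      (hlfQ xa (ι ya)).subset Set.Ioo_subset_Icc_self
    have hICE := hICE2Q a xa (ι ya) hxaa (by rw [hfe2 ya, hya]) hxalt hconsec
    rw [← Set.Finite.coe_toFinset hIfin, finsum_mem_coe_finset] at hICE
    -- xa not in range
    have hxar : xa ∉ Set.range ι := hnotrange a ya hya hyamin xa hxaa hxalt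
    -- image is inside the interval
    have hsub : Finset.image ι (Set.toFinite (LSet θ κ ya)).toFinset ⊆ hIfin.toFinset := by
      intro x hx
      obtain ⟨h1, h2, h3⟩ := himgmem a ya hya x hx
      rw [Set.Finite.mem_toFinset]
      refine ⟨?_, h1⟩
      have hcomp : x ≤ xa ∨ xa ≤ x := by
        apply hACQ
        rw [hxaa]
        exact h2
      rcases hcomp with h | h
      · exact absurd (hfe3 h h3) hxar
      · refine lt_of_le_of_ne h (fun h' => hxar (h' ▸ h3))
    have hxa'mem : xa' ∈ hIfin.toFinset := by
      rw [Set.Finite.mem_toFinset]; exact ⟨hlt, hxa'lt⟩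
    have hxa'img : xa' ∉ Finset.image ι (Set.toFinite (LSet θ κ ya)).toFinset := by
      intro h
      exact hxa'r (himgmem a ya hya xa' h).2.2
    -- sum over insert xa' image ≥ 3
    have hS : ∑ x ∈ insert xa' (Finset.image ι (Set.toFinite (LSet θ κ ya)).toFinset),
        (-θ (κQ x) a) = (-θ (κQ xa') a) + 2 := by
      rw [Finset.sum_insert hxa'img, himg a ya hya, hL2]
    have hSsub : insert xa' (Finset.image ι (Set.toFinite (LSet θ κ ya)).toFinset)
        ⊆ hIfin.toFinset := by
      intro x hx
      rcases Finset.mem_insert.1 hx with rfl | hx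
      · exact hxa'mem
      · exact hsub hx
    have hle : ∑ x ∈ insert xa' (Finset.image ι (Set.toFinite (LSet θ κ ya)).toFinset),
        (-θ (κQ x) a) ≤ ∑ x ∈ hIfin.toFinset, (-θ (κQ x) a) := by
      apply Finset.sum_le_sum_of_subset_of_nonneg hSsub
      intro x hx _
      rw [Set.Finite.mem_toFinset] at hx
      have := hθ.2.1 (κQ x) a (fun h => hconsec x hx h)
      omega
    rw [hICE, hS] at hle
    rw [hxa'c] at hle
    omega
  -- now combine
  obtain ⟨xb, hxbb, hxblt, hxbmax⟩ := getmax b yb (notmin b yb hyb hLb)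
  obtain ⟨xc, hxcc, hxclt, hxcmax⟩ := getmax c yc (notmin c yc hyc hLc)
  have hxbr : xb ∉ Set.range ι := hnotrange b yb hyb hybmin xb hxbb hxblt
  have hxcr : xc ∉ Set.range ι := hnotrange c yc hyc hycmin xc hxcc hxclt
  have hne : xb ≠ xc := by
    intro h; apply hbc; rw [← hxbb, ← hxcc, h]
  have hcomp : xb ≤ xc ∨ xc ≤ xb := by
    apply hACQ; rw [hxbb, hxcc]; exact hadj
  rcases hcomp with h | h
  · exact sym b c hbc hcb yb hyb hybmin hLb xb hxbb hxblt hxbmax xc hxcc hxcr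
      (lt_of_le_of_ne h hne)
  · exact sym c b hbc.symm hadj yc hyc hycmin hLc xc hxcc hxclt hxcmax xb hxbb hxbr
      (lt_of_le_of_ne h hne.symm)
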